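/- There exist a morphism Θ = {θ_n}_{n∈ℕ} between direct systems of Banach spaces with every θ_n injective, such that the induced map on direct limits lim→ θ_* is not injective. Concretely: in ℓ², let a_1 = (1/k)_k and a_n = e_n for n ≥ 2, let M_n = span{a_1,…,a_n} with inclusion transition maps, let N_n = ℓ² with identity transition maps, and let θ_n be the restriction to M_n of the shift-annihilating map T(λ_1,λ_2,…) = (0,λ_2,λ_3,…). Then each θ_n is injective, lim→ M_* = lim→ N_* = ℓ², and lim→ θ_* = T is not injective. -/

import Mathlib

open MeasureTheory Filter

noncomputable section

variable {X : Type*} [MeasurableSpace X]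

/-- `L⁰(μ)`: real-valued functions up to `μ`-a.e. equality, as a commutative ring. -/
instance L0.instCommRing {μ : Measure X} : CommRing (X →ₘ[μ] ℝ) where
  __ : AddCommGroup (X →ₘ[μ] ℝ) := inferInstance
  __ : CommMonoid (X →ₘ[μ] ℝ) := inferInstance
  left_distrib a b c := AEEqFun.toGerm_injective <| by
    simp only [AEEqFun.mul_toGerm, AEEqFun.add_toGerm]; ring
  right_distrib a b c := AEEqFun.toGerm_injective <| by
    simp only [AEEqFun.mul_toGerm, AEEqFun.add_toGerm]; ring
  zero_mul a := AEEqFun.toGerm_injective <| by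
    simp only [AEEqFun.mul_toGerm, AEEqFun.zero_toGerm]; ring
  mul_zero a := AEEqFun.toGerm_injective <| by
    simp only [AEEqFun.mul_toGerm, AEEqFun.zero_toGerm]; ring

/-- A pointwise seminorm on an `L⁰(μ)`-module, with values in `L⁰(μ)`
(ordered by the `μ`-a.e. order). -/
structure PtwiseSeminorm (μ : Measure X) (M : Type*) [AddCommGroup M]
    [Module (X →ₘ[μ] ℝ) M] where
  pn : M → X →ₘ[μ] ℝ
  nonneg : ∀ v, 0 ≤ pn v
  add_le : ∀ v w, pn (v + w) ≤ pn v + pn w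
  smul_eq : ∀ (f : X →ₘ[μ] ℝ) (v : M), pn (f • v) = |f| * pn v

/-- A pointwise seminorm is a pointwise norm if `|v| = 0` a.e. implies `v = 0`. -/
def PtwiseSeminorm.IsNorm {μ : Measure X} {M : Type*} [AddCommGroup M]
    [Module (X →ₘ[μ] ℝ) M] (N : PtwiseSeminorm μ M) : Prop :=
  ∀ v, N.pn v = 0 → v = 0

/-- The distance `d(v,w) = ∫ min(|v-w|,1) dm'` associated with a pointwise
(semi)norm `pnorm` (with subtraction `sub`). -/
def pd {μ : Measure X} (m' : Measure X) {M : Type*}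
    (pnorm : M → X →ₘ[μ] ℝ) (sub : M → M → M) (v w : M) : ℝ :=
  ∫ x, min ((pnorm (sub v w)) x) 1 ∂m'

/-- Sequential continuity with respect to two distance functions. -/
def SeqCont {A B : Type*} (dA : A → A → ℝ) (dB : B → B → ℝ) (f : A → B) : Prop :=
  ∀ (u : ℕ → A) (a : A), Tendsto (fun n => dA (u n) a) atTop (nhds 0) →
    Tendsto (fun n => dB (f (u n)) (f a)) atTop (nhds 0)

/-- Completeness with respect to a distance function. -/
def CompleteWith {A : Type*} (d : A → A → ℝ) : Prop :=
  ∀ u : ℕ → A, (∀ ε > 0, ∃ k, ∀ n ≥ k, ∀ p ≥ k, d (u n) (u p) < ε) →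
    ∃ a, Tendsto (fun n => d (u n) a) atTop (nhds 0)

/-- A normed `L⁰(μ)`-module: an `L⁰(μ)`-module with a pointwise norm that is
complete for the induced distance (via the auxiliary probability measure `m'`). -/
structure NormedL0Module (μ m' : Measure X) where
  carrier : Type*
  ag : AddCommGroup carrier
  mo : Module (X →ₘ[μ] ℝ) carrier
  pn : carrier → X →ₘ[μ] ℝ
  pn_nonneg : ∀ v, 0 ≤ pn v
  pn_add_le : ∀ v w, pn (v + w) ≤ pn v + pn w
  pn_smul : ∀ (f : X →ₘ[μ] ℝ) v, pn (f • v) = |f| * pn v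
  pn_eq_zero : ∀ v, pn v = 0 → v = 0
  complete : CompleteWith (pd m' pn (fun a b => a - b))

attribute [instance] NormedL0Module.ag NormedL0Module.mo

variable {μ m' : Measure X}

/-- A morphism of normed `L⁰(μ)`-modules: `L⁰`-linear with `|φ(v)| ≤ |v|` a.e. -/
structure NMHom (M N : NormedL0Module μ m') where
  toFun : M.carrier → N.carrier
  map_add' : ∀ v w, toFun (v + w) = toFun v + toFun w
  map_smul' : ∀ (f : X →ₘ[μ] ℝ) v, toFun (f • v) = f • toFun v
  bound' : ∀ v, N.pn (toFun v) ≤ M.pn v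

/-- The identity morphism. -/
def NMHom.id (M : NormedL0Module μ m') : NMHom M M :=
  ⟨fun v => v, fun _ _ => rfl, fun _ _ => rfl, fun _ => le_rfl⟩

universe w

/-- A direct system of normed `L⁰(μ)`-modules over a preordered index set. -/
structure DirSystem (μ m' : Measure X) (I : Type*) [Preorder I] where
  obj : I → NormedL0Module.{_, w} μ m'
  map : ∀ i j, i ≤ j → NMHom (obj i) (obj j)
  map_self : ∀ i v, (map i i le_rfl).toFun v = v
  map_comp : ∀ i j k (hij : i ≤ j) (hjk : j ≤ k) v,
    (map j k hjk).toFun ((map i j hij).toFun v) = (map i k (hij.trans hjk)).toFun v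

/-- An inverse system of normed `L⁰(μ)`-modules over a preordered index set. -/
structure InvSystem (μ m' : Measure X) (I : Type*) [Preorder I] where
  obj : I → NormedL0Module.{_, w} μ m'
  map : ∀ i j, i ≤ j → NMHom (obj j) (obj i)
  map_self : ∀ i v, (map i i le_rfl).toFun v = v
  map_comp : ∀ i j k (hij : i ≤ j) (hjk : j ≤ k) v,
    (map i j hij).toFun ((map j k hjk).toFun v) = (map i k (hij.trans hjk)).toFun v

/-- `(L, ι)` is a direct limit of the system `(obj, map)`: it is a target and
every target factors uniquely through it. -/
structure IsDirectLimit {I : Type*} [Preorder I] (obj : I → NormedL0Module μ m')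
    (map : ∀ i j, i ≤ j → (obj i).carrier → (obj j).carrier)
    (L : NormedL0Module μ m') (can : ∀ i, NMHom (obj i) L) : Prop where
  compat : ∀ i j (h : i ≤ j) v, (can j).toFun (map i j h v) = (can i).toFun v
  universal : ∀ (T : NormedL0Module.{_, w} μ m') (psi : ∀ i, NMHom (obj i) T),
    (∀ i j (h : i ≤ j) v, (psi j).toFun (map i j h v) = (psi i).toFun v) →
    ∃! F : NMHom L T, ∀ i v, F.toFun ((can i).toFun v) = (psi i).toFun v

/-- `(L, pr)` is an inverse limit of the system `(obj, map)`: it is a cone and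
every cone factors uniquely through it. -/
structure IsInverseLimit {I : Type*} [Preorder I] (obj : I → NormedL0Module μ m')
    (map : ∀ i j, i ≤ j → (obj j).carrier → (obj i).carrier)
    (L : NormedL0Module μ m') (pr : ∀ i, NMHom L (obj i)) : Prop where
  compat : ∀ i j (h : i ≤ j) v, map i j h ((pr j).toFun v) = (pr i).toFun v
  universal : ∀ (T : NormedL0Module.{_, w} μ m') (Q : ∀ i, NMHom T (obj i)),
    (∀ i j (h : i ≤ j) w, map i j h ((Q j).toFun w) = (Q i).toFun w) →
    ∃! F : NMHom T L, ∀ i w, (pr i).toFun (F.toFun w) = (Q i).toFun w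

/-- A continuous `L⁰(μ)`-linear map between normed `L⁰(μ)`-modules
(an element of `Hom(M,N)`). -/
structure CLM (M N : NormedL0Module μ m') where
  toFun : M.carrier → N.carrier
  map_add' : ∀ v w, toFun (v + w) = toFun v + toFun w
  map_smul' : ∀ (f : X →ₘ[μ] ℝ) v, toFun (f • v) = f • toFun v
  cont' : SeqCont (pd m' M.pn (fun a b => a - b)) (pd m' N.pn (fun a b => a - b)) toFun

/-- An element of the dual module `M* = Hom(M, L⁰(μ))`. -/
structure DualElem (M : NormedL0Module μ m') where
  toFun : M.carrier → X →ₘ[μ] ℝ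
  map_add' : ∀ v w, toFun (v + w) = toFun v + toFun w
  map_smul' : ∀ (f : X →ₘ[μ] ℝ) v, toFun (f • v) = f * toFun v
  cont' : SeqCont (pd m' M.pn (fun a b => a - b))
    (pd m' (fun g : X →ₘ[μ] ℝ => |g|) (fun a b => a - b)) toFun

namespace Stmt12Aux

noncomputable abbrev H2 := lp (fun _ : ℕ => ℝ) 2

lemma sing_apply (i : ℕ) (c : ℝ) (j : ℕ) :
    (lp.single 2 i c : ℕ → ℝ) j = if j = i then c else 0 := by
  rcases eq_or_ne j i with h | h
  · subst h; simp [lp.single_apply_self]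
  · simp [lp.single_apply, h]

lemma sing_add (i : ℕ) (x y : ℝ) :
    (lp.single 2 i (x + y) : H2) = lp.single 2 i x + lp.single 2 i y := by
  apply lp.ext; funext j
  simp only [sing_apply, lp.coeFn_add, Pi.add_apply]
  split <;> simp

noncomputable def Tlin : H2 →ₗ[ℝ] H2 where
  toFun f := f - lp.single 2 0 ((f : ℕ → ℝ) 0)
  map_add' f g := by
    simp only [lp.coeFn_add, Pi.add_apply, sing_add]; abel
  map_smul' c f := by
    have h : ((c • f : H2) : ℕ → ℝ) 0 = c * (f : ℕ → ℝ) 0 := by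
      simp [lp.coeFn_smul]
    simp only [RingHom.id_apply]
    rw [smul_sub, h, ← smul_eq_mul, lp.single_smul]

lemma Tlin_norm (f : H2) : ‖Tlin f‖ ≤ ‖f‖ := by
  have h2 : (0:ℝ) < (2 : ENNReal).toReal := by norm_num
  have key := lp.norm_compl_sum_single h2 f ({0} : Finset ℕ)
  simp only [Finset.sum_singleton] at key
  have hT : Tlin f = f - lp.single 2 0 ((f : ℕ → ℝ) 0) := rfl
  have h2' : (2 : ENNReal).toReal = 2 := by norm_num
  rw [h2'] at key
  have hle : ‖Tlin f‖ ^ (2:ℝ) ≤ ‖f‖ ^ (2:ℝ) := by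
    rw [hT, key]
    have : 0 ≤ ‖(f : ℕ → ℝ) 0‖ ^ (2:ℝ) := Real.rpow_nonneg (norm_nonneg _) _
    linarith
  rw [show (2:ℝ) = ((2:ℕ):ℝ) by norm_num, Real.rpow_natCast, Real.rpow_natCast] at hle
  exact (pow_le_pow_iff_left₀ (norm_nonneg _) (norm_nonneg _) two_ne_zero).mp hle


noncomputable def T : H2 →L[ℝ] H2 :=
  Tlin.mkContinuous 1 (fun f => by simpa using Tlin_norm f)

lemma T_norm : ‖T‖ ≤ 1 := Tlin.mkContinuous_norm_le (by norm_num) _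

lemma T_coord (f : H2) (k : ℕ) :
    (T f : ℕ → ℝ) k = if k = 0 then 0 else (f : ℕ → ℝ) k := by
  have : T f = f - lp.single 2 0 ((f : ℕ → ℝ) 0) := rfl
  rw [this, lp.coeFn_sub, Pi.sub_apply, sing_apply]
  rcases eq_or_ne k 0 with rfl | hk
  · simp
  · simp [hk]

lemma key_inj (a : ℕ → H2)
    (ha0 : ∀ k : ℕ, (a 0 : ℕ → ℝ) k = 1 / (k + 1))
    (han : ∀ n : ℕ, 1 ≤ n → a n = lp.single 2 n 1)
    (n : ℕ) (x : H2) (hx : x ∈ Submodule.span ℝ (a '' Set.Iic n))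
    (h0 : ∀ k, k ≠ 0 → (x : ℕ → ℝ) k = 0) : x = 0 := by
  let φ : H2 →ₗ[ℝ] ℝ :=
    { toFun := fun f => (f : ℕ → ℝ) 0 - ((n : ℝ) + 2) * (f : ℕ → ℝ) (n + 1)
      map_add' := fun f g => by simp [lp.coeFn_add]; ring
      map_smul' := fun c f => by simp [lp.coeFn_smul]; ring }
  have hφ : ∀ y ∈ a '' Set.Iic n, φ y = 0 := by
    rintro y ⟨i, hi, rfl⟩
    simp only [Set.mem_Iic] at hi
    rcases Nat.eq_zero_or_pos i with rfl | h
    · show (a 0 : ℕ → ℝ) 0 - ((n : ℝ) + 2) * (a 0 : ℕ → ℝ) (n + 1) = 0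
      rw [ha0 0, ha0 (n + 1)]
      push_cast
      have : (n : ℝ) + 1 + 1 ≠ 0 := by positivity
      field_simp
      ring
    · show (a i : ℕ → ℝ) 0 - ((n : ℝ) + 2) * (a i : ℕ → ℝ) (n + 1) = 0
      rw [han i h, sing_apply, sing_apply]
      have h1 : (0 : ℕ) ≠ i := by omega
      have h2 : n + 1 ≠ i := by omega
      simp [h1, h2]
  have hker : Submodule.span ℝ (a '' Set.Iic n) ≤ LinearMap.ker φ := by
    rw [Submodule.span_le]
    intro y hy
    simpa [LinearMap.mem_ker] using hφ y hy
  have hφx : φ x = 0 := hker hx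
  have hx0 : (x : ℕ → ℝ) 0 = 0 := by
    have hn1 := h0 (n + 1) (by omega)
    simpa [φ, hn1] using hφx
  apply lp.ext; funext k
  rcases eq_or_ne k 0 with rfl | hk
  · simpa using hx0
  · simpa using h0 k hk

lemma T_not_inj : ¬ Function.Injective T := by
  intro h
  have h1 : T (lp.single 2 0 (1 : ℝ)) = 0 := by
    apply lp.ext; funext k
    rw [T_coord]
    rcases eq_or_ne k 0 with rfl | hk
    · simp
    · simp [hk, sing_apply]
  have h2 : lp.single 2 0 (1 : ℝ) = 0 := h (by rw [h1, map_zero])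
  have := congrArg (fun g : H2 => (g : ℕ → ℝ) 0) h2
  simp [lp.single_apply_self] at this

lemma dense_union (a : ℕ → H2)
    (ha0 : ∀ k : ℕ, (a 0 : ℕ → ℝ) k = 1 / (k + 1))
    (han : ∀ n : ℕ, 1 ≤ n → a n = lp.single 2 n 1) :
    Dense (⋃ n : ℕ, (Submodule.span ℝ (a '' Set.Iic n) : Set H2)) := by
  set S : Submodule ℝ H2 := Submodule.span ℝ (Set.range a) with hS
  have hsingle_mem : ∀ i : ℕ, 1 ≤ i → ∀ c : ℝ, lp.single 2 i c ∈ S := by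
    intro i hi c
    have : (lp.single 2 i c : H2) = c • a i := by
      rw [han i hi, ← lp.single_smul, smul_eq_mul, mul_one]
    rw [this]
    exact Submodule.smul_mem _ _ (Submodule.subset_span ⟨i, rfl⟩)
  have hw : ∀ K : ℕ,
      (a 0 - ∑ i ∈ (Finset.range K).erase 0, lp.single 2 i ((a 0 : ℕ → ℝ) i)) ∈ S := by
    intro K
    refine sub_mem (Submodule.subset_span ⟨0, rfl⟩) (Submodule.sum_mem _ fun i hi => ?_)
    exact hsingle_mem i (by have := Finset.ne_of_mem_erase hi; omega) _
  have hsum : HasSum (fun i : ℕ => (lp.single 2 i ((a 0 : ℕ → ℝ) i) : H2)) (a 0) :=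
    lp.hasSum_single (by norm_num) (a 0)
  have htend : Tendsto (fun K : ℕ => ∑ i ∈ Finset.range K, (lp.single 2 i ((a 0 : ℕ → ℝ) i) : H2))
      atTop (nhds (a 0)) := hsum.tendsto_sum_nat
  have htendw : Tendsto
      (fun K : ℕ => a 0 - ∑ i ∈ (Finset.range K).erase 0, (lp.single 2 i ((a 0 : ℕ → ℝ) i) : H2))
      atTop (nhds (lp.single 2 0 (1 : ℝ))) := by
    have h1 : Tendsto
        (fun K : ℕ => (lp.single 2 0 ((a 0 : ℕ → ℝ) 0) : H2) +
          (a 0 - ∑ i ∈ Finset.range K, (lp.single 2 i ((a 0 : ℕ → ℝ) i) : H2)))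
        atTop (nhds ((lp.single 2 0 ((a 0 : ℕ → ℝ) 0) : H2) + (a 0 - a 0))) :=
      tendsto_const_nhds.add (tendsto_const_nhds.sub htend)
    have ha00 : (a 0 : ℕ → ℝ) 0 = 1 := by rw [ha0 0]; norm_num
    rw [sub_self, add_zero, ha00] at h1
    refine h1.congr' ?_
    filter_upwards [eventually_ge_atTop 1] with K hK
    rw [Finset.sum_erase_eq_sub (Finset.mem_range.mpr (by omega)), ha00]
    abel
  have h0mem : (lp.single 2 0 (1 : ℝ) : H2) ∈ S.topologicalClosure := by
    rw [← SetLike.mem_coe, Submodule.topologicalClosure_coe]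
    exact mem_closure_of_tendsto htendw (Eventually.of_forall hw)
  have hall : ∀ (i : ℕ) (c : ℝ), (lp.single 2 i c : H2) ∈ S.topologicalClosure := by
    intro i c
    rcases Nat.eq_zero_or_pos i with rfl | hi
    · have : (lp.single 2 0 c : H2) = c • lp.single 2 0 (1 : ℝ) := by
        rw [← lp.single_smul, smul_eq_mul, mul_one]
      rw [this]
      exact Submodule.smul_mem _ _ h0mem
    · exact S.le_topologicalClosure (hsingle_mem i hi c)
  have htop : S.topologicalClosure = ⊤ := by
    rw [eq_top_iff]
    intro f _
    have hsumf : HasSum (fun i : ℕ => (lp.single 2 i ((f : ℕ → ℝ) i) : H2)) f :=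
      lp.hasSum_single (by norm_num) f
    have htf := hsumf.tendsto_sum_nat
    have hmemK : ∀ K : ℕ,
        (∑ i ∈ Finset.range K, (lp.single 2 i ((f : ℕ → ℝ) i) : H2)) ∈ S.topologicalClosure :=
      fun K => Submodule.sum_mem _ fun i _ => hall i _
    have hclosed : IsClosed (S.topologicalClosure : Set H2) := S.isClosed_topologicalClosure
    exact hclosed.mem_of_tendsto htf (Eventually.of_forall hmemK)
  have hdenseS : Dense (S : Set H2) := by
    rw [dense_iff_closure_eq, ← Submodule.topologicalClosure_coe, htop]
    simp
  have hrange : Set.range a = ⋃ n : ℕ, a '' Set.Iic n := by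
    ext x
    constructor
    · rintro ⟨i, rfl⟩
      exact Set.mem_iUnion.mpr ⟨i, ⟨i, Set.mem_Iic.mpr le_rfl, rfl⟩⟩
    · intro hx
      obtain ⟨n, i, _, rfl⟩ := Set.mem_iUnion.mp hx
      exact ⟨i, rfl⟩
  have hmono : Monotone (fun n : ℕ => Submodule.span ℝ (a '' Set.Iic n)) :=
    fun n m h => Submodule.span_mono (Set.image_mono (Set.Iic_subset_Iic.mpr (by exact_mod_cast h)))
  have hUnionEq : (⋃ n : ℕ, (Submodule.span ℝ (a '' Set.Iic n) : Set H2)) = (S : Set H2) := by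
    ext x
    simp only [Set.mem_iUnion, SetLike.mem_coe]
    constructor
    · rintro ⟨n, hx⟩
      exact Submodule.span_mono (Set.image_subset_range a _) hx
    · intro hx
      have hSeq : S = ⨆ n : ℕ, Submodule.span ℝ (a '' Set.Iic n) := by
        rw [hS, hrange, Submodule.span_iUnion]
      rw [hSeq] at hx
      exact (Submodule.mem_iSup_of_directed _ hmono.directed_le).mp hx
  rw [hUnionEq]
  exact hdenseS

end Stmt12Aux


/-- A stagewise-injective morphism of direct systems of Banach
spaces whose direct limit is not injective: in `ℓ²`, with `a 0 = (1/(k+1))_k` and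
`a n = e_n` for `n ≥ 1`, `M_n = span{a 0, …, a n}` (with dense union, so
`lim→ M_* = ℓ²`), the coordinate-killing contraction `T` (killing the 0-th
coordinate) is injective on each `M_n` but not injective on `ℓ²`. -/
theorem stmt12 (a : ℕ → lp (fun _ : ℕ => ℝ) 2)
    (ha0 : ∀ k : ℕ, (a 0 : ℕ → ℝ) k = 1 / (k + 1))
    (han : ∀ n : ℕ, 1 ≤ n → a n = lp.single 2 n 1) :
    ∃ T : lp (fun _ : ℕ => ℝ) 2 →L[ℝ] lp (fun _ : ℕ => ℝ) 2,
      (∀ f (k : ℕ), (T f : ℕ → ℝ) k = if k = 0 then 0 else (f : ℕ → ℝ) k) ∧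
      ‖T‖ ≤ 1 ∧
      (∀ n : ℕ, Set.InjOn T (Submodule.span ℝ (a '' Set.Iic n) : Set (lp (fun _ : ℕ => ℝ) 2))) ∧
      ¬ Function.Injective T ∧
      Dense (⋃ n : ℕ, (Submodule.span ℝ (a '' Set.Iic n) : Set (lp (fun _ : ℕ => ℝ) 2))) := by
  refine ⟨Stmt12Aux.T, Stmt12Aux.T_coord, Stmt12Aux.T_norm, ?_, Stmt12Aux.T_not_inj,
    Stmt12Aux.dense_union a ha0 han⟩
  intro n u hu v hv huv
  have hu' : u ∈ Submodule.span ℝ (a '' Set.Iic n) := hu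
  have hv' : v ∈ Submodule.span ℝ (a '' Set.Iic n) := hv
  have hmem : u - v ∈ Submodule.span ℝ (a '' Set.Iic n) := sub_mem hu' hv'
  have hT : Stmt12Aux.T (u - v) = 0 := by rw [map_sub, huv, sub_self]
  have hcoord : ∀ k, k ≠ 0 → ((u - v : Stmt12Aux.H2) : ℕ → ℝ) k = 0 := by
    intro k hk
    have h := congrArg (fun g : Stmt12Aux.H2 => (g : ℕ → ℝ) k) hT
    simp only [lp.coeFn_zero, Pi.zero_apply] at h
    rw [Stmt12Aux.T_coord, if_neg hk] at h
    exact h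
  exact sub_eq_zero.mp (Stmt12Aux.key_inj a ha0 han n (u - v) hmem hcoord)

end
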